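/- Let X, A, L be as in the suspicion bound (A finite-valued, L {0,1}-valued, A independent of X conditioned on L=0, and Pr(L=0 | X=x, A=a) > 0 whenever Pr(X=x, A=a) > 0). Then equality I(X;A) = susp(X,A) − susp(X) holds if and only if the distribution of A equals the conditional distribution of A given L=0, i.e. Pr(A=a) = Pr(A=a | L=0) for all a. -/

import Mathlib

open Finset

/-- Probability of an event `E` under the probability mass function `p`
on a finite sample space `Ω`. -/
noncomputable def Pr {Ω : Type*} [Fintype Ω] (p : Ω → ℝ) (E : Set Ω) : ℝ :=
  ∑ ω, E.indicator p ω

/-- Conditional probability `Pr(E | F)`. -/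
noncomputable def cPr {Ω : Type*} [Fintype Ω] (p : Ω → ℝ) (E F : Set Ω) : ℝ :=
  Pr p (E ∩ F) / Pr p F

/-- The suspicion given a random variable `Yv`:
`susp(Y) = Σ_y Pr(Y=y) · (−log₂ Pr(L=0 | Y=y))`. -/
noncomputable def susp {Ω Y : Type*} [Fintype Ω] [Fintype Y] (p : Ω → ℝ)
    (L : Ω → Bool) (Yv : Ω → Y) : ℝ :=
  ∑ y, Pr p {ω | Yv ω = y} * (-Real.logb 2 (cPr p {ω | L ω = false} {ω | Yv ω = y}))

/-- Mutual information (base 2) between two finite-valued random variables. -/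
noncomputable def mutInfo {Ω S T : Type*} [Fintype Ω] [Fintype S] [Fintype T]
    (p : Ω → ℝ) (Xv : Ω → S) (Av : Ω → T) : ℝ :=
  ∑ x, ∑ a, Pr p {ω | Xv ω = x ∧ Av ω = a} *
    Real.logb 2 (Pr p {ω | Xv ω = x ∧ Av ω = a} /
      (Pr p {ω | Xv ω = x} * Pr p {ω | Av ω = a}))

/-- Conditional Shannon entropy (base 2) `H(A | X)`. -/
noncomputable def condEntropy {Ω S T : Type*} [Fintype Ω] [Fintype S] [Fintype T]
    (p : Ω → ℝ) (Av : Ω → T) (Xv : Ω → S) : ℝ :=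
  ∑ x, ∑ a, Pr p {ω | Xv ω = x ∧ Av ω = a} *
    Real.logb 2 (Pr p {ω | Xv ω = x} / Pr p {ω | Xv ω = x ∧ Av ω = a})

/-- Conditional mutual information (base 2) `I(X; A | Z)`. -/
noncomputable def condMutInfo {Ω S T U : Type*} [Fintype Ω] [Fintype S] [Fintype T] [Fintype U]
    (p : Ω → ℝ) (Xv : Ω → S) (Av : Ω → T) (Zv : Ω → U) : ℝ :=
  ∑ z, ∑ x, ∑ a, Pr p {ω | Xv ω = x ∧ Av ω = a ∧ Zv ω = z} *
    Real.logb 2 ((Pr p {ω | Xv ω = x ∧ Av ω = a ∧ Zv ω = z} * Pr p {ω | Zv ω = z}) /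
      (Pr p {ω | Xv ω = x ∧ Zv ω = z} * Pr p {ω | Av ω = a ∧ Zv ω = z}))


lemma Pr_nonneg {Ω : Type*} [Fintype Ω] {p : Ω → ℝ} (hp : ∀ ω, 0 ≤ p ω) (E : Set Ω) :
    0 ≤ Pr p E :=
  Finset.sum_nonneg fun ω _ => Set.indicator_nonneg (fun ω _ => hp ω) ω

lemma Pr_mono {Ω : Type*} [Fintype Ω] {p : Ω → ℝ} (hp : ∀ ω, 0 ≤ p ω) {E F : Set Ω}
    (h : E ⊆ F) : Pr p E ≤ Pr p F :=
  Finset.sum_le_sum fun ω _ => Set.indicator_le_indicator_of_subset h hp ω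

lemma Pr_congr {Ω : Type*} [Fintype Ω] (p : Ω → ℝ) {E F : Set Ω}
    (h : ∀ ω, ω ∈ E ↔ ω ∈ F) : Pr p E = Pr p F := by
  rw [Set.ext h]

lemma Pr_sum_fiber {Ω T : Type*} [Fintype Ω] [Fintype T] (p : Ω → ℝ)
    (P : Ω → Prop) (f : Ω → T) :
    ∑ t, Pr p {ω | P ω ∧ f ω = t} = Pr p {ω | P ω} := by
  classical
  unfold Pr
  rw [Finset.sum_comm]
  refine Finset.sum_congr rfl fun ω _ => ?_
  simp only [Set.indicator_apply, Set.mem_setOf_eq]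
  by_cases h : P ω
  · simp [h]
  · simp [h]


lemma kl_aux {S T : Type*} [Fintype S] [Fintype T]
    (q : S → T → ℝ) (s : S → T → ℝ) (qX sX : S → ℝ) (qA sA : T → ℝ) (l0 : ℝ)
    (hqnn : ∀ x a, 0 ≤ q x a)
    (hqX : ∀ x, ∑ a, q x a = qX x)
    (hqA : ∀ a, ∑ x, q x a = qA a)
    (hsA_le : ∀ a, sA a ≤ qA a)
    (hSqA : ∑ a, qA a = 1)
    (hSsA : ∑ a, sA a = l0)
    (hsAnn : ∀ a, 0 ≤ sA a)
    (hl0 : 0 < l0)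
    (hspos : ∀ x a, 0 < q x a → 0 < s x a)
    (hs_le_sX : ∀ x a, s x a ≤ sX x)
    (hs_le_sA : ∀ x a, s x a ≤ sA a)
    (hq_le_qX : ∀ x a, q x a ≤ qX x)
    (hq_le_qA : ∀ x a, q x a ≤ qA a)
    (hind : ∀ x a, 0 < q x a → s x a = sX x * (sA a / l0)) :
    ((∑ x, ∑ a, q x a * Real.logb 2 (q x a / (qX x * qA a))) =
      (∑ x, ∑ a, q x a * (-Real.logb 2 (s x a / q x a))) -
      (∑ x, qX x * (-Real.logb 2 (sX x / qX x)))) ↔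
      ∀ a, qA a = sA a / l0 := by
  classical
  have hlog2 : (0:ℝ) < Real.log 2 := Real.log_pos one_lt_two
  have hqAnn : ∀ a, 0 ≤ qA a := fun a => (hqA a) ▸ Finset.sum_nonneg fun x _ => hqnn x a
  -- per-term identity
  have hterm : ∀ x a,
      q x a * (-Real.logb 2 (s x a / q x a)) - q x a * (-Real.logb 2 (sX x / qX x))
        - q x a * Real.logb 2 (q x a / (qX x * qA a))
      = q x a * Real.logb 2 (qA a / (sA a / l0)) := by
    intro x a
    rcases eq_or_lt_of_le (hqnn x a) with h0 | hq
    · simp [← h0]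
    · have hs := hspos x a hq
      have hsX : 0 < sX x := lt_of_lt_of_le hs (hs_le_sX x a)
      have hsA : 0 < sA a := lt_of_lt_of_le hs (hs_le_sA x a)
      have hqXp : 0 < qX x := lt_of_lt_of_le hq (hq_le_qX x a)
      have hqAp : 0 < qA a := lt_of_lt_of_le hq (hq_le_qA x a)
      rw [hind x a hq,
        Real.logb_div (mul_pos hsX (div_pos hsA hl0)).ne' hq.ne',
        Real.logb_mul hsX.ne' (div_pos hsA hl0).ne',
        Real.logb_div hsA.ne' hl0.ne',
        Real.logb_div hsX.ne' hqXp.ne',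
        Real.logb_div hq.ne' (mul_pos hqXp hqAp).ne',
        Real.logb_mul hqXp.ne' hqAp.ne',
        Real.logb_div hqAp.ne' (div_pos hsA hl0).ne',
        Real.logb_div hsA.ne' hl0.ne']
      ring
  -- the master identity
  have hD : (∑ x, ∑ a, q x a * (-Real.logb 2 (s x a / q x a))) -
      (∑ x, qX x * (-Real.logb 2 (sX x / qX x))) -
      (∑ x, ∑ a, q x a * Real.logb 2 (q x a / (qX x * qA a)))
      = ∑ a, qA a * Real.logb 2 (qA a / (sA a / l0)) := by
    rw [show (∑ x, qX x * (-Real.logb 2 (sX x / qX x)))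
        = ∑ x, ∑ a, q x a * (-Real.logb 2 (sX x / qX x)) from
      Finset.sum_congr rfl fun x _ => by rw [← Finset.sum_mul, hqX]]
    rw [← Finset.sum_sub_distrib, ← Finset.sum_sub_distrib]
    rw [show (∑ x, ((∑ a, q x a * (-Real.logb 2 (s x a / q x a)))
          - (∑ a, q x a * (-Real.logb 2 (sX x / qX x)))
          - (∑ a, q x a * Real.logb 2 (q x a / (qX x * qA a)))))
        = ∑ x, ∑ a, q x a * Real.logb 2 (qA a / (sA a / l0)) from
      Finset.sum_congr rfl fun x _ => by
        rw [← Finset.sum_sub_distrib, ← Finset.sum_sub_distrib]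
        exact Finset.sum_congr rfl fun a _ => hterm x a]
    rw [Finset.sum_comm]
    exact Finset.sum_congr rfl fun a _ => by rw [← Finset.sum_mul, hqA]
  -- pointwise KL bound
  have main : ∀ a, (qA a - sA a / l0) / Real.log 2 ≤ qA a * Real.logb 2 (qA a / (sA a / l0))
      ∧ (qA a ≠ sA a / l0 →
        (qA a - sA a / l0) / Real.log 2 < qA a * Real.logb 2 (qA a / (sA a / l0))) := by
    intro a
    by_cases hqa : qA a = 0
    · have h1 : sA a = 0 := le_antisymm (hqa ▸ hsA_le a) (hsAnn a)
      refine ⟨by simp [hqa, h1], fun hne => absurd (by simp [hqa, h1]) hne⟩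
    · have hqa' : 0 < qA a := lt_of_le_of_ne (hqAnn a) (Ne.symm hqa)
      have hsa : 0 < sA a := by
        obtain ⟨x, _, hx⟩ := Finset.exists_ne_zero_of_sum_ne_zero
          (by rw [hqA a]; exact hqa : ∑ x, q x a ≠ 0)
        have hqx : 0 < q x a := lt_of_le_of_ne (hqnn x a) (Ne.symm hx)
        exact lt_of_lt_of_le (hspos x a hqx) (hs_le_sA x a)
      have hrp : 0 < sA a / l0 := div_pos hsa hl0
      have key : ∀ (strict : Bool),
          (if strict then qA a ≠ sA a / l0 else True) →
          True := fun _ _ => trivial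
      have hlogeq : qA a * Real.logb 2 (qA a / (sA a / l0))
          = qA a * (Real.log (qA a) - Real.log (sA a / l0)) / Real.log 2 := by
        rw [Real.logb, Real.log_div hqa'.ne' hrp.ne']; ring
      have hmain : ∀ (h : Real.log (sA a / l0 / qA a) ≤ sA a / l0 / qA a - 1),
          qA a - sA a / l0 ≤ qA a * (Real.log (qA a) - Real.log (sA a / l0)) := by
        intro h
        rw [Real.log_div hrp.ne' hqa'.ne'] at h
        have h2 := mul_le_mul_of_nonneg_left h hqa'.le
        have h3 : qA a * (sA a / l0 / qA a - 1) = sA a / l0 - qA a := by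
          field_simp
        nlinarith
      constructor
      · rw [hlogeq, div_le_div_iff_of_pos_right hlog2]
        exact hmain (Real.log_le_sub_one_of_pos (div_pos hrp hqa'))
      · intro hne
        rw [hlogeq, div_lt_div_iff_of_pos_right hlog2]
        have hne1 : sA a / l0 / qA a ≠ 1 := by
          intro h1
          rw [div_eq_one_iff_eq hqa'.ne'] at h1
          exact hne h1.symm
        have h := Real.log_lt_sub_one_of_pos (div_pos hrp hqa') hne1
        rw [Real.log_div hrp.ne' hqa'.ne'] at h
        have h2 := mul_lt_mul_of_pos_left h hqa'
        have h3 : qA a * (sA a / l0 / qA a - 1) = sA a / l0 - qA a := by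
          field_simp
        nlinarith
  have hgsum : ∑ a, (qA a - sA a / l0) / Real.log 2 = 0 := by
    rw [← Finset.sum_div, Finset.sum_sub_distrib, hSqA, ← Finset.sum_div, hSsA,
      div_self hl0.ne', sub_self, zero_div]
  constructor
  · intro heq
    have hD0 : ∑ a, qA a * Real.logb 2 (qA a / (sA a / l0)) = 0 := by
      rw [← hD, ← heq, sub_self]
    by_contra hcon
    push_neg at hcon
    obtain ⟨a0, ha0⟩ := hcon
    have hlt : (0:ℝ) < ∑ a, qA a * Real.logb 2 (qA a / (sA a / l0)) := by
      rw [← hgsum]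
      exact Finset.sum_lt_sum (fun a _ => (main a).1)
        ⟨a0, Finset.mem_univ a0, (main a0).2 ha0⟩
    linarith
  · intro h
    have hKL0 : ∑ a, qA a * Real.logb 2 (qA a / (sA a / l0)) = 0 := by
      refine Finset.sum_eq_zero fun a _ => ?_
      rw [← h a]
      by_cases hqa : qA a = 0
      · simp [hqa]
      · rw [div_self hqa, Real.logb_one, mul_zero]
    linarith [hD, hKL0]

/-- equality `I(X;A) = susp(X,A) − susp(X)` holds iff the
distribution of `A` equals the conditional distribution of `A` given `L = 0`. -/
theorem info_eq_susp_increase_iff {Ω S T : Type*} [Fintype Ω] [Fintype S] [Fintype T]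
    (p : Ω → ℝ) (hp : ∀ ω, 0 ≤ p ω) (hp1 : ∑ ω, p ω = 1)
    (X : Ω → S) (A : Ω → T) (L : Ω → Bool)
    (hindep : ∀ (a : T) (x : S), 0 < Pr p {ω | X ω = x ∧ L ω = false} →
      cPr p {ω | A ω = a} {ω | X ω = x ∧ L ω = false} =
        cPr p {ω | A ω = a} {ω | L ω = false})
    (hpos : ∀ (x : S) (a : T), 0 < Pr p {ω | X ω = x ∧ A ω = a} →
      0 < cPr p {ω | L ω = false} {ω | X ω = x ∧ A ω = a}) :
    mutInfo p X A = susp p L (fun ω => (X ω, A ω)) - susp p L X ↔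
      ∀ a : T, Pr p {ω | A ω = a} = cPr p {ω | A ω = a} {ω | L ω = false} := by
  classical
  have hqX : ∀ x : S, ∑ a, Pr p {ω | X ω = x ∧ A ω = a} = Pr p {ω | X ω = x} :=
    fun x => Pr_sum_fiber p (fun ω => X ω = x) A
  have hqA : ∀ a : T, ∑ x, Pr p {ω | X ω = x ∧ A ω = a} = Pr p {ω | A ω = a} := by
    intro a
    calc ∑ x, Pr p {ω | X ω = x ∧ A ω = a}
        = ∑ x, Pr p {ω | A ω = a ∧ X ω = x} :=
          Finset.sum_congr rfl fun x _ => Pr_congr p fun ω => and_comm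
      _ = Pr p {ω | A ω = a} := Pr_sum_fiber p (fun ω => A ω = a) X
  have hsA_le : ∀ a : T, Pr p ({ω | A ω = a} ∩ {ω | L ω = false}) ≤ Pr p {ω | A ω = a} :=
    fun a => Pr_mono hp Set.inter_subset_left
  have hPrTrue : Pr p {ω : Ω | True} = 1 := by
    unfold Pr
    rw [Set.setOf_true, Set.indicator_univ]
    exact hp1
  have hSqA : ∑ a, Pr p {ω | A ω = a} = 1 := by
    calc ∑ a, Pr p {ω | A ω = a} = ∑ a, Pr p {ω | True ∧ A ω = a} :=
          Finset.sum_congr rfl fun a _ => Pr_congr p fun ω => ⟨fun h => ⟨trivial, h⟩, fun h => h.2⟩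
      _ = Pr p {ω : Ω | True} := Pr_sum_fiber p (fun _ => True) A
      _ = 1 := hPrTrue
  have hSsA : ∑ a, Pr p ({ω | A ω = a} ∩ {ω | L ω = false}) = Pr p {ω | L ω = false} := by
    calc ∑ a, Pr p ({ω | A ω = a} ∩ {ω | L ω = false})
        = ∑ a, Pr p {ω | L ω = false ∧ A ω = a} :=
          Finset.sum_congr rfl fun a _ => Pr_congr p fun ω =>
            ⟨fun h => ⟨h.2, h.1⟩, fun h => ⟨h.2, h.1⟩⟩
      _ = Pr p {ω | L ω = false} := Pr_sum_fiber p (fun ω => L ω = false) A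
  have hspos : ∀ x a, 0 < Pr p {ω | X ω = x ∧ A ω = a} →
      0 < Pr p ({ω | L ω = false} ∩ {ω | X ω = x ∧ A ω = a}) := by
    intro x a hq
    have h2 : 0 < Pr p ({ω | L ω = false} ∩ {ω | X ω = x ∧ A ω = a}) /
        Pr p {ω | X ω = x ∧ A ω = a} := hpos x a hq
    have h3 := mul_pos h2 hq
    rwa [div_mul_cancel₀ _ hq.ne'] at h3
  have hl0 : 0 < Pr p {ω | L ω = false} := by
    obtain ⟨a, _, ha⟩ := Finset.exists_ne_zero_of_sum_ne_zero
      (f := fun a => Pr p {ω | A ω = a}) (by rw [hSqA]; exact one_ne_zero)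
    obtain ⟨x, _, hx⟩ := Finset.exists_ne_zero_of_sum_ne_zero
      (show ∑ x, Pr p {ω | X ω = x ∧ A ω = a} ≠ 0 by rw [hqA a]; exact ha)
    have hq : 0 < Pr p {ω | X ω = x ∧ A ω = a} :=
      lt_of_le_of_ne (Pr_nonneg hp _) (Ne.symm hx)
    exact lt_of_lt_of_le (hspos x a hq) (Pr_mono hp Set.inter_subset_left)
  have hind : ∀ x a, 0 < Pr p {ω | X ω = x ∧ A ω = a} →
      Pr p ({ω | L ω = false} ∩ {ω | X ω = x ∧ A ω = a}) =
        Pr p ({ω | L ω = false} ∩ {ω | X ω = x}) *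
          (Pr p ({ω | A ω = a} ∩ {ω | L ω = false}) / Pr p {ω | L ω = false}) := by
    intro x a hq
    have hs := hspos x a hq
    have hsXL : 0 < Pr p {ω | X ω = x ∧ L ω = false} :=
      lt_of_lt_of_le hs (Pr_mono hp fun ω h => ⟨h.2.1, h.1⟩)
    have h2 : Pr p ({ω | A ω = a} ∩ {ω | X ω = x ∧ L ω = false}) /
        Pr p {ω | X ω = x ∧ L ω = false} =
        Pr p ({ω | A ω = a} ∩ {ω | L ω = false}) / Pr p {ω | L ω = false} :=
      hindep a x hsXL
    have e1 : Pr p ({ω | A ω = a} ∩ {ω | X ω = x ∧ L ω = false}) =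
        Pr p ({ω | L ω = false} ∩ {ω | X ω = x ∧ A ω = a}) :=
      Pr_congr p fun ω => ⟨fun h => ⟨h.2.2, h.2.1, h.1⟩, fun h => ⟨h.2.2, h.2.1, h.1⟩⟩
    have e2 : Pr p {ω | X ω = x ∧ L ω = false} = Pr p ({ω | L ω = false} ∩ {ω | X ω = x}) :=
      Pr_congr p fun ω => ⟨fun h => ⟨h.2, h.1⟩, fun h => ⟨h.2, h.1⟩⟩
    rw [e1, e2] at h2
    have hsX : 0 < Pr p ({ω | L ω = false} ∩ {ω | X ω = x}) := e2 ▸ hsXL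
    rw [div_eq_div_iff hsX.ne' hl0.ne'] at h2
    field_simp
    linear_combination h2
  have main := kl_aux
    (fun x a => Pr p {ω | X ω = x ∧ A ω = a})
    (fun x a => Pr p ({ω | L ω = false} ∩ {ω | X ω = x ∧ A ω = a}))
    (fun x => Pr p {ω | X ω = x})
    (fun x => Pr p ({ω | L ω = false} ∩ {ω | X ω = x}))
    (fun a => Pr p {ω | A ω = a})
    (fun a => Pr p ({ω | A ω = a} ∩ {ω | L ω = false}))
    (Pr p {ω | L ω = false})
    (fun _ _ => Pr_nonneg hp _) hqX hqA hsA_le hSqA hSsA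
    (fun _ => Pr_nonneg hp _) hl0 hspos
    (fun x a => Pr_mono hp fun ω h => ⟨h.1, h.2.1⟩)
    (fun x a => Pr_mono hp fun ω h => ⟨h.2.2, h.1⟩)
    (fun x a => Pr_mono hp fun ω h => h.1)
    (fun x a => Pr_mono hp fun ω h => h.2)
    hind
  have epair : susp p L (fun ω => (X ω, A ω)) =
      ∑ x, ∑ a, Pr p {ω | X ω = x ∧ A ω = a} *
        (-Real.logb 2 (Pr p ({ω | L ω = false} ∩ {ω | X ω = x ∧ A ω = a}) /
          Pr p {ω | X ω = x ∧ A ω = a})) := by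
    show (∑ y : S × T, Pr p {ω | (X ω, A ω) = y} *
      (-Real.logb 2 (cPr p {ω | L ω = false} {ω | (X ω, A ω) = y}))) = _
    rw [Fintype.sum_prod_type]
    refine Finset.sum_congr rfl fun x _ => Finset.sum_congr rfl fun a _ => ?_
    have hset : {ω | (X ω, A ω) = (x, a)} = {ω | X ω = x ∧ A ω = a} :=
      Set.ext fun ω => by simp [Prod.ext_iff]
    rw [hset]
    rfl
  rw [epair]
  exact main
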